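/- Fix k ≥ 1. For every element w of the free group on k generators, the image of w in K_k under the homomorphism sending the i-th generator to g_i is the identity permutation of ℤ^k if and only if there exists N such that for all n ≥ N, the image of w in K_k^n under the homomorphism sending the i-th generator to g_i^{(n)} is the identity permutation of (ℤ/nℤ)^k. (That is, K_k is the limit of the marked groups K_k^n.) -/

import Mathlib

/-- The generator `g_i` acting on `(Fin k → R)`: it adds the `i`-th standard basis
vector `e_i` to `v` when `v j = 0` for all `j < i`, and fixes `v` otherwise. -/
def kGen (R : Type*) [AddGroup R] [One R] [DecidableEq R] (k : ℕ) (i : Fin k) :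
    Equiv.Perm (Fin k → R) where
  toFun v := if ∀ j, j < i → v j = 0 then (fun j => v j + if j = i then 1 else 0) else v
  invFun v := if ∀ j, j < i → v j = 0 then (fun j => v j - if j = i then 1 else 0) else v
  left_inv v := by
    by_cases h : ∀ j, j < i → v j = 0
    · have h' : ∀ j, j < i → v j + (if j = i then 1 else 0) = 0 := fun j hj => by
        rw [if_neg (Fin.ne_of_lt hj), add_zero]; exact h j hj
      simp only [if_pos h, if_pos h']
      funext j; exact add_sub_cancel_right _ _
    · simp only [if_neg h]
  right_inv v := by
    by_cases h : ∀ j, j < i → v j = 0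
    · have h' : ∀ j, j < i → v j - (if j = i then 1 else 0) = 0 := fun j hj => by
        rw [if_neg (Fin.ne_of_lt hj), sub_zero]; exact h j hj
      simp only [if_pos h, if_pos h']
      funext j; exact sub_add_cancel _ _
    · simp only [if_neg h]

/-- `K_k`: the subgroup of `Perm(ℤ^k)` generated by `g_1, …, g_k`. -/
def Kk (k : ℕ) : Subgroup (Equiv.Perm (Fin k → ℤ)) :=
  Subgroup.closure (Set.range (kGen ℤ k))

/-- `K_k^n`: the subgroup of `Perm((ℤ/nℤ)^k)` generated by `g_1^{(n)}, …, g_k^{(n)}`. -/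
def KkMod (k n : ℕ) : Subgroup (Equiv.Perm (Fin k → ZMod n)) :=
  Subgroup.closure (Set.range (kGen (ZMod n) k))

/-- The diagonal generator `ĝ_i = (g_i^{(n)})_{n ≥ 1}` of `K̂_k` (with `n`-th coordinate
indexed as `n + 1` so that all moduli `n + 1 ≥ 1` occur). -/
def ghat (k : ℕ) (i : Fin k) : ∀ n : ℕ, Equiv.Perm (Fin k → ZMod (n + 1)) :=
  fun n => kGen (ZMod (n + 1)) k i

/-- `K̂_k`: the subgroup of `∏_{n ≥ 1} Perm((ℤ/nℤ)^k)` generated by the diagonal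
elements `ĝ_1, …, ĝ_k`. -/
def Khat (k : ℕ) : Subgroup (∀ n : ℕ, Equiv.Perm (Fin k → ZMod (n + 1))) :=
  Subgroup.closure (Set.range (ghat k))

lemma kGen_apply (R : Type*) [AddGroup R] [One R] [DecidableEq R] (k : ℕ) (i : Fin k)
    (v : Fin k → R) :
    kGen R k i v = if ∀ j, j < i → v j = 0 then (fun j => v j + if j = i then 1 else 0) else v :=
  rfl

lemma kGen_inv_apply (R : Type*) [AddGroup R] [One R] [DecidableEq R] (k : ℕ) (i : Fin k)
    (v : Fin k → R) :
    (kGen R k i)⁻¹ v = if ∀ j, j < i → v j = 0 then (fun j => v j - if j = i then 1 else 0) else v :=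
  rfl

lemma cond_iff {k : ℕ} (i : Fin k) (u : Fin k → ℤ) (n : ℕ) (hn : ∀ j, |u j| < (n : ℤ)) :
    (∀ j, j < i → ((u j : ZMod n) : ZMod n) = 0) ↔ (∀ j, j < i → u j = 0) := by
  constructor
  · intro h j hj
    have h0 := h j hj
    rw [ZMod.intCast_zmod_eq_zero_iff_dvd] at h0
    exact Int.eq_zero_of_abs_lt_dvd h0 (hn j)
  · intro h j hj; rw [h j hj]; simp

lemma key (k : ℕ) (w : FreeGroup (Fin k)) :
    ∃ L : ℕ, ∀ u : Fin k → ℤ,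
      (∀ j, |FreeGroup.lift (kGen ℤ k) w u j - u j| ≤ (L : ℤ)) ∧
      ∀ n : ℕ, (∀ j, |u j| + L < (n : ℤ)) →
        (fun j => ((FreeGroup.lift (kGen ℤ k) w u j : ℤ) : ZMod n)) =
          FreeGroup.lift (kGen (ZMod n) k) w (fun j => ((u j : ℤ) : ZMod n)) := by
  have hpure : ∀ i : Fin k, (pure i : FreeGroup (Fin k)) = FreeGroup.of i := fun _ => rfl
  induction w using FreeGroup.induction_on with
  | C1 =>
    refine ⟨0, fun u => ⟨fun j => by simp, fun n hn => by simp⟩⟩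
  | of i =>
    refine ⟨1, fun u => ⟨fun j => ?_, fun n hn => ?_⟩⟩
    · simp only [hpure, FreeGroup.lift_apply_of, Nat.cast_one]
      rw [kGen_apply]
      split_ifs with h
      · simp only [add_sub_cancel_left]
        split_ifs <;> simp
      · simp
    · have hn' : ∀ j, |u j| < (n : ℤ) := fun j => by have := hn j; push_cast at this ⊢; linarith
      simp only [hpure, FreeGroup.lift_apply_of]
      rw [kGen_apply, kGen_apply]
      by_cases h : ∀ j, j < i → u j = 0
      · rw [if_pos h, if_pos ((cond_iff i u n hn').mpr h)]
        funext j
        by_cases hj : j = i <;> simp [hj]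
      · rw [if_neg h, if_neg (fun hc => h ((cond_iff i u n hn').mp hc))]
  | inv_of i _ =>
    refine ⟨1, fun u => ⟨fun j => ?_, fun n hn => ?_⟩⟩
    · simp only [hpure, map_inv, FreeGroup.lift_apply_of, Nat.cast_one]
      rw [kGen_inv_apply]
      split_ifs with h
      · simp only [sub_sub_cancel_left]
        split_ifs <;> simp
      · simp
    · have hn' : ∀ j, |u j| < (n : ℤ) := fun j => by have := hn j; push_cast at this ⊢; linarith
      simp only [hpure, map_inv, FreeGroup.lift_apply_of]
      rw [kGen_inv_apply, kGen_inv_apply]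
      by_cases h : ∀ j, j < i → u j = 0
      · rw [if_pos h, if_pos ((cond_iff i u n hn').mpr h)]
        funext j
        by_cases hj : j = i <;> simp [hj]
      · rw [if_neg h, if_neg (fun hc => h ((cond_iff i u n hn').mp hc))]
  | mul x y ihx ihy =>
    obtain ⟨Lx, hx⟩ := ihx
    obtain ⟨Ly, hy⟩ := ihy
    refine ⟨Lx + Ly, fun u => ?_⟩
    have hdy := (hy u).1
    have hdx := (hx (FreeGroup.lift (kGen ℤ k) y u)).1
    constructor
    · intro j
      have h3 := abs_sub_le (FreeGroup.lift (kGen ℤ k) x (FreeGroup.lift (kGen ℤ k) y u) j)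
        (FreeGroup.lift (kGen ℤ k) y u j) (u j)
      simp only [map_mul, Equiv.Perm.mul_apply]
      push_cast
      have := hdy j; have := hdx j
      linarith
    · intro n hn
      have hny : ∀ j, |u j| + Ly < (n : ℤ) := fun j => by
        have := hn j; push_cast at this ⊢; linarith
      have hnx : ∀ j, |FreeGroup.lift (kGen ℤ k) y u j| + Lx < (n : ℤ) := fun j => by
        have h1 := hn j; have h2 := hdy j
        have h3 := abs_sub_abs_le_abs_sub (FreeGroup.lift (kGen ℤ k) y u j) (u j)
        push_cast at h1 ⊢; linarith
      have ey := (hy u).2 n hny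
      have ex := (hx (FreeGroup.lift (kGen ℤ k) y u)).2 n hnx
      simp only [map_mul, Equiv.Perm.mul_apply]
      rw [ex, ey]

/-- `K_k` is the limit of the marked groups `K_k^n`: a word `w` in the
free group on `k` generators is trivial in `K_k` iff it is trivial in `K_k^n` for all
sufficiently large `n`. -/
theorem Kk_limit_of_marked_groups (k : ℕ) (hk : 1 ≤ k) (w : FreeGroup (Fin k)) :
    FreeGroup.lift (kGen ℤ k) w = 1 ↔
      ∃ N : ℕ, ∀ n : ℕ, N ≤ n → FreeGroup.lift (kGen (ZMod (n + 1)) k) w = 1 := by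
  obtain ⟨L, hL⟩ := key k w
  constructor
  · intro h
    refine ⟨2 * L + 2, fun n hn => ?_⟩
    apply Equiv.ext; intro v; funext x
    set u : Fin k → ℤ := fun j => (v j).valMinAbs with hu
    have hcast : (fun j => ((u j : ℤ) : ZMod (n + 1))) = v := by
      funext j; exact ZMod.coe_valMinAbs (v j)
    have hbound : ∀ j, |u j| + L < ((n + 1 : ℕ) : ℤ) := by
      intro j
      have h1 : (u j).natAbs ≤ (n + 1) / 2 := ZMod.natAbs_valMinAbs_le (v j)
      have h2 : |u j| = ((u j).natAbs : ℤ) := Int.abs_eq_natAbs _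
      rw [h2]
      have : (u j).natAbs + L < n + 1 := by omega
      exact_mod_cast this
    have := (hL u).2 (n + 1) hbound
    rw [h] at this
    simp only [Equiv.Perm.coe_one, id_eq] at this
    rw [hcast] at this
    exact congrFun this.symm x
  · rintro ⟨N, hN⟩
    apply Equiv.ext; intro u
    simp only [Equiv.Perm.coe_one, id_eq]
    set M : ℕ := Finset.univ.sup fun j : Fin k => (u j).natAbs with hM
    set n : ℕ := N + M + L with hn
    have hbound : ∀ j, |u j| + L < ((n + 1 : ℕ) : ℤ) := by
      intro j
      have h1 : (u j).natAbs ≤ M := Finset.le_sup (f := fun j : Fin k => (u j).natAbs) (Finset.mem_univ j)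
      have h2 : |u j| = ((u j).natAbs : ℤ) := Int.abs_eq_natAbs _
      rw [h2]
      have : (u j).natAbs + L < n + 1 := by omega
      exact_mod_cast this
    have heq := (hL u).2 (n + 1) hbound
    rw [hN n (by omega)] at heq
    simp only [Equiv.Perm.coe_one, id_eq] at heq
    funext j
    have hj := congrFun heq j
    have hdvd : ((n + 1 : ℕ) : ℤ) ∣ (FreeGroup.lift (kGen ℤ k) w u j - u j) := by
      rw [← ZMod.intCast_zmod_eq_zero_iff_dvd]
      push_cast
      rw [hj]
      ring
    have habs : |FreeGroup.lift (kGen ℤ k) w u j - u j| < ((n + 1 : ℕ) : ℤ) := by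
      have := (hL u).1 j
      push_cast
      omega
    have := Int.eq_zero_of_abs_lt_dvd hdvd habs
    linarith [this]
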